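/- (Correctness of the 3-SAT-to-lock-coverability construction.) Let φ = C₁ ∧ … ∧ C_n be a 3-CNF formula over propositional variables V, with literals Lit = V ∪ {¬x : x ∈ V}. For each literal l ∈ Lit and each i ∈ {1,…,n}, let m_i^l be a distinct lock. For each i ∈ {1,…,n}, let thread i be the nondeterministic sequential program that first chooses a literal l occurring in C_i, then executes acq(m_i^l), then for each j ≠ i (in increasing order of j) executes acq(m_j^{¬l}) followed by rel(m_j^{¬l}), and finally reaches a distinguished final location ℓ_i. Then there exists an interleaved execution τ̂ of the n threads (each thread's projection τ̂↑i being a complete run of thread i, ending at ℓ_i) satisfying the lock predicate sync_lk(τ̂), if and only if φ is satisfiable. -/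

import Mathlib

/-!
Common definitions: control flow graphs, traces, interleavings of parameterized
programs, the covering preorder, Mazurkiewicz reductions, atomic fusions,
sync-point instrumentations, locks and general synchronization alphabets.
-/

/-- `PathRel E ℓ w ℓ'` : the word `w` labels a path from `ℓ` to `ℓ'` in the
labeled graph with edge relation `E`. -/
inductive PathRel {L α : Type} (E : L → α → L → Prop) : L → List α → L → Prop
  | nil (ℓ : L) : PathRel E ℓ [] ℓ
  | cons {ℓ ℓ' ℓ'' : L} {a : α} {w : List α} :
      E ℓ a ℓ' → PathRel E ℓ' w ℓ'' → PathRel E ℓ (a :: w) ℓ''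

/-- A control flow graph over the alphabet `α`. -/
structure CFG (α : Type) where
  Loc : Type
  loc_finite : Finite Loc
  Edge : Loc → α → Loc → Prop
  init : Loc
  exit : Loc
  init_ne_exit : init ≠ exit

namespace CFG

variable {α : Type}

/-- The set of words labeling paths from the initial to the exit location. -/
def traces (G : CFG α) : Set (List α) := { w | PathRel G.Edge G.init w G.exit }

/-- The set of actions occurring in `G`. -/
def alphabet (G : CFG α) : Set α := { a | ∃ ℓ ℓ', G.Edge ℓ a ℓ' }

/-- Action `a` labels at most one edge of `G`. -/
def UniqueAct (G : CFG α) (a : α) : Prop :=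
  ∀ ⦃ℓ₁ ℓ₁' ℓ₂ ℓ₂' : G.Loc⦄, G.Edge ℓ₁ a ℓ₁' → G.Edge ℓ₂ a ℓ₂' → ℓ₁ = ℓ₂ ∧ ℓ₁' = ℓ₂'

/-- The transition relation is finite. -/
def EdgeFinite (G : CFG α) : Prop :=
  { p : G.Loc × α × G.Loc | G.Edge p.1 p.2.1 p.2.2 }.Finite

/-- Every location is reachable from the initial location, and the exit
location is reachable from every location. -/
def Reachable (G : CFG α) : Prop :=
  ∀ ℓ : G.Loc, (∃ w, PathRel G.Edge G.init w ℓ) ∧ (∃ w, PathRel G.Edge ℓ w G.exit)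

/-- Well-formedness of a CFG over a plain alphabet (finitely many transitions,
reachability conditions, and every action labels at most one edge). -/
def WF (G : CFG α) : Prop := G.EdgeFinite ∧ G.Reachable ∧ ∀ a : α, G.UniqueAct a

end CFG

/-! ### Interleavings -/

/-- `τ↑i` : the projection of an interleaving to the actions of thread `i`. -/
def projThread {α : Type} (i : ℕ) (τ : List (α × ℕ)) : List α :=
  (τ.filter (fun x => x.2 == i)).map Prod.fst

/-- The interleavings of the parameterized program with thread template `G`
and no synchronization. -/
def progLang {α : Type} (G : CFG α) : Set (List (α × ℕ)) :=
  { τ | ∀ i : ℕ, projThread i τ ∈ G.traces ∨ projThread i τ = [] }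

/-- One swap of two adjacent commuting indexed actions of different threads. -/
def SwapStep {α : Type} (I : Set (α × α)) (τ τ' : List (α × ℕ)) : Prop :=
  ∃ (ρ σ : List (α × ℕ)) (a b : α) (i j : ℕ),
    (a, b) ∈ I ∧ i ≠ j ∧
      τ = ρ ++ (a, i) :: (b, j) :: σ ∧ τ' = ρ ++ (b, j) :: (a, i) :: σ

/-- The covering preorder `⊑_I`: the smallest reflexive-transitive relation
allowing swaps of adjacent `I`-commuting actions of different threads. -/
def CoveredBy {α : Type} (I : Set (α × α)) : List (α × ℕ) → List (α × ℕ) → Prop :=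
  Relation.ReflTransGen (SwapStep I)

/-- `L₁` is a Mazurkiewicz reduction (up to `I`) of `L₂`. -/
def MazReduction {α : Type} (I : Set (α × α)) (L₁ L₂ : Set (List (α × ℕ))) : Prop :=
  L₁ ⊆ L₂ ∧ ∀ τ ∈ L₂, ∃ τ' ∈ L₁, CoveredBy I τ τ'

/-! ### Morphisms -/

/-- Image of a word under a morphism `μ : α → 𝒫(β^*)`. -/
def morphWord {α β : Type} (μ : α → Set (List β)) : List α → Set (List β)
  | [] => {[]}
  | x :: w => { s | ∃ u ∈ μ x, ∃ v ∈ morphWord μ w, s = u ++ v }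

/-- Image of a language under a morphism. -/
def morphLang {α β : Type} (μ : α → Set (List β)) (L : Set (List α)) : Set (List β) :=
  ⋃ w ∈ L, morphWord μ w

/-! ### Atomic fusions -/

/-- Locations of the graph obtained from `G'` by substituting `Gβ k` for the
edge labeled `β k`: locations of `G'` together with the interior locations of
each `Gβ k`. -/
def fuseLoc {α : Type} (G' : CFG α) {n : ℕ} (Gβ : Fin n → CFG α) : Type :=
  G'.Loc ⊕ Σ k : Fin n, { ℓ : (Gβ k).Loc // ℓ ≠ (Gβ k).init ∧ ℓ ≠ (Gβ k).exit }

open Classical in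
/-- Embedding of the locations of `Gβ k` into the substituted graph, identifying
the initial and exit locations of `Gβ k` with the endpoints of the `β k` edge. -/
noncomputable def fuseEmb {α : Type} (G' : CFG α) {n : ℕ} (Gβ : Fin n → CFG α)
    (src tgt : Fin n → G'.Loc) (k : Fin n) (ℓ : (Gβ k).Loc) : fuseLoc G' Gβ :=
  if h1 : ℓ = (Gβ k).init then Sum.inl (src k)
  else if h2 : ℓ = (Gβ k).exit then Sum.inl (tgt k)
  else Sum.inr ⟨k, ℓ, h1, h2⟩

/-- Edges of the graph obtained from `G'` by substituting each `Gβ k` for the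
edge labeled `β k` (with endpoints `src k`, `tgt k`). -/
def fuseEdge {α : Type} (G' : CFG α) {n : ℕ} (β : Fin n → α) (Gβ : Fin n → CFG α)
    (src tgt : Fin n → G'.Loc) (x : fuseLoc G' Gβ) (a : α) (y : fuseLoc G' Gβ) : Prop :=
  (∃ ℓ ℓ', G'.Edge ℓ a ℓ' ∧ (∀ k, a ≠ β k) ∧ x = Sum.inl ℓ ∧ y = Sum.inl ℓ') ∨
  (∃ k ℓ ℓ', (Gβ k).Edge ℓ a ℓ' ∧
      x = fuseEmb G' Gβ src tgt k ℓ ∧ y = fuseEmb G' Gβ src tgt k ℓ')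

/-- An atomic fusion `F = (G', (β 0, Gβ 0), …, (β (n-1), Gβ (n-1)))` of the CFG `G`:
`G` is (up to isomorphism) obtained from `G'` by replacing, for each `k`, the unique
edge labeled `β k` by the graph `Gβ k`. -/
structure AtomicFusion {α : Type} (G : CFG α) (n : ℕ) where
  G' : CFG α
  β : Fin n → α
  Gβ : Fin n → CFG α
  β_inj : Function.Injective β
  src : Fin n → G'.Loc
  tgt : Fin n → G'.Loc
  β_edge : ∀ k, G'.Edge (src k) (β k) (tgt k)
  Gβ_alph : ∀ k a, a ∈ (Gβ k).alphabet → ∀ k', a ≠ β k'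
  Gβ_nonempty : ∀ k, ((Gβ k).traces).Nonempty
  iso : G.Loc ≃ fuseLoc G' Gβ
  iso_init : iso G.init = Sum.inl G'.init
  iso_exit : iso G.exit = Sum.inl G'.exit
  iso_edge : ∀ ℓ a ℓ', G.Edge ℓ a ℓ' ↔ fuseEdge G' β Gβ src tgt (iso ℓ) a (iso ℓ')

namespace AtomicFusion

variable {α : Type} {G : CFG α} {n : ℕ}

/-- The fusion morphism `μ_F`: maps each block symbol `β k` to `traces (Gβ k)`
and any other action `a` to `{[a]}`. -/
def morph (F : AtomicFusion G n) (a : α) : Set (List α) :=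
  { w | (∃ k, a = F.β k ∧ w ∈ (F.Gβ k).traces) ∨ ((∀ k, a ≠ F.β k) ∧ w = [a]) }

/-- The lift `μ̂_F` of the fusion morphism to indexed actions. -/
def morphIdx (F : AtomicFusion G n) (x : α × ℕ) : Set (List (α × ℕ)) :=
  { w | ∃ u ∈ F.morph x.1, w = u.map (fun a => (a, x.2)) }

/-- Soundness of an atomic fusion wrt. the commutativity relation `I`:
`μ̂_F(L(G'))` is a Mazurkiewicz reduction (up to `I`) of `L(G)`. -/
def Sound (F : AtomicFusion G n) (I : Set (α × α)) : Prop :=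
  MazReduction I (morphLang F.morphIdx (progLang F.G')) (progLang G)

end AtomicFusion

/-! ### Movers -/

/-- `a` is a left-mover if `(b, a) ∈ I` for all `b ∈ Σ(G)`. -/
def LeftMover {α : Type} (G : CFG α) (I : Set (α × α)) (a : α) : Prop :=
  ∀ b ∈ G.alphabet, (b, a) ∈ I

/-- `a` is a right-mover if `(a, b) ∈ I` for all `b ∈ Σ(G)`. -/
def RightMover {α : Type} (G : CFG α) (I : Set (α × α)) (a : α) : Prop :=
  ∀ b ∈ G.alphabet, (a, b) ∈ I

/-! ### Sync-points -/

/-- The word `⟨•:t₁⟩ … ⟨•:t_n⟩` where `T = {t₁ < … < t_n}`; the sync-point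
symbol `•` is represented by `none`. -/
def bulletWord {α : Type} (T : Finset ℕ) : List (Option α × ℕ) :=
  (T.sort (· ≤ ·)).map (fun t => ((none : Option α), t))

/-- A concatenation of words, each of which either consists of program actions
of threads in `T` only, or equals `⟨•:T⟩`. -/
inductive PhaseWord {α : Type} (T : Finset ℕ) : List (Option α × ℕ) → Prop
  | nil : PhaseWord T []
  | act {w τ : List (Option α × ℕ)} :
      (∀ x ∈ w, (∃ a : α, x.1 = some a) ∧ x.2 ∈ T) → PhaseWord T τ → PhaseWord T (w ++ τ)
  | bullet {τ : List (Option α × ℕ)} : PhaseWord T τ → PhaseWord T (bulletWord T ++ τ)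

/-- `sync_{•,T}`: while the threads in `T` are running they pass sync-points
together; at some point a subset `T' ⊊ T` of threads remains. -/
inductive SyncT {α : Type} : Finset ℕ → List (Option α × ℕ) → Prop
  | base : SyncT ∅ []
  | step {T T' : Finset ℕ} {τ₁ τ₂ : List (Option α × ℕ)} :
      T' ⊂ T → PhaseWord T τ₁ → SyncT T' τ₂ → SyncT T (τ₁ ++ τ₂)

/-- `sync_•(τ̂)` : there is a finite set `T ⊆ ℕ` with `sync_{•,T}(τ̂)`. -/
def SyncBullet {α : Type} (τ : List (Option α × ℕ)) : Prop := ∃ T : Finset ℕ, SyncT T τ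

/-- Restriction of an indexed word over `Σ ∪ {•}` to its `Σ`-indexed letters. -/
def restrictSigma {α : Type} (τ : List (Option α × ℕ)) : List (α × ℕ) :=
  τ.filterMap (fun x => x.1.map (fun a => (a, x.2)))

/-- `G'` is a sync-point instrumentation of `G`: erasing `•` from the traces of
`G'` yields exactly the traces of `G`, injectively. -/
structure SyncInstr {α : Type} (G : CFG α) (G' : CFG (Option α)) : Prop where
  proj_traces : G.traces = (fun τ => τ.filterMap id) '' G'.traces
  proj_inj : ∀ τ₁ ∈ G'.traces, ∀ τ₂ ∈ G'.traces, τ₁.filterMap id = τ₂.filterMap id → τ₁ = τ₂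

/-- Well-formedness of a CFG over `Σ ∪ {•}` (every action of `Σ` labels at most
one edge; `•` may label several edges). -/
def CFG.WFsync {α : Type} (G' : CFG (Option α)) : Prop :=
  G'.EdgeFinite ∧ G'.Reachable ∧ ∀ a : α, G'.UniqueAct (some a)

/-- The language `L(G, G')` of the sync-point instrumented program. -/
def instrLang {α : Type} (G' : CFG (Option α)) : Set (List (α × ℕ)) :=
  { τ | ∃ τ' : List (Option α × ℕ), τ = restrictSigma τ' ∧ SyncBullet τ' ∧
      ∀ i : ℕ, projThread i τ' ∈ G'.traces ∨ projThread i τ' = [] }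

/-- `|w|_•` : the number of occurrences of the sync-point symbol in `w`. -/
def bulletCount {α : Type} (w : List (Option α)) : ℕ := (w.filter (fun x => x.isNone)).length

/-- The phase order `⤳`: `a` can occur in a strictly later phase than `b` in
some execution of the instrumented program. -/
def PhaseOrder {α : Type} (G' : CFG (Option α)) (a b : α) : Prop :=
  ∃ τ' : List (Option α × ℕ), SyncBullet τ' ∧ restrictSigma τ' ∈ instrLang G' ∧
    ∃ i j : ℕ, i ≠ j ∧
      ∃ τ₁ σ₁, projThread i τ' = τ₁ ++ some a :: σ₁ ∧
      ∃ τ₂ σ₂, projThread j τ' = τ₂ ++ some b :: σ₂ ∧ bulletCount τ₁ < bulletCount τ₂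

/-! ### General synchronization alphabets -/

/-- A synchronization alphabet: a set `σs` of synchronization actions together
with a predicate `Φ` on indexed words over `Σ ∪ S`, preserved by all
permutations of thread indices. -/
structure SyncAlphabet (α σs : Type) where
  Φ : List ((α ⊕ σs) × ℕ) → Prop
  perm_inv : ∀ (π : Equiv.Perm ℕ) (τ : List ((α ⊕ σs) × ℕ)),
      Φ τ → Φ (τ.map (fun x => (x.1, π x.2)))

/-- Restriction of an indexed word over `Σ ∪ S` to its `Σ`-indexed letters. -/
def restrictActions {α σs : Type} (τ' : List ((α ⊕ σs) × ℕ)) : List (α × ℕ) :=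
  τ'.filterMap (fun x => (x.1.getLeft?).map (fun a => (a, x.2)))

/-- The language of the parameterized program `P = ((S, Φ), G)`. -/
def syncLang {α σs : Type} (SA : SyncAlphabet α σs) (G : CFG (α ⊕ σs)) :
    Set (List (α × ℕ)) :=
  { τ | ∃ τ', τ = restrictActions τ' ∧ SA.Φ τ' ∧
      ∀ i : ℕ, projThread i τ' ∈ G.traces ∨ projThread i τ' = [] }

/-- The configuration `C` is coverable in `P = ((S, Φ), G)`. -/
def Coverable {α σs : Type} (SA : SyncAlphabet α σs) (G : CFG (α ⊕ σs))
    {r : ℕ} (C : Fin r → G.Loc) : Prop :=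
  ∃ (τ' : List ((α ⊕ σs) × ℕ)) (t : Fin r → ℕ), SA.Φ τ' ∧ Function.Injective t ∧
    ∀ k, PathRel G.Edge G.init (projThread (t k) τ') (C k)

/-- Well-formedness of a CFG over `Σ ∪ S` (only actions of `Σ` are required to
label at most one edge). -/
def CFG.WFsum {α σs : Type} (G : CFG (α ⊕ σs)) : Prop :=
  G.EdgeFinite ∧ G.Reachable ∧ ∀ a : α, G.UniqueAct (Sum.inl a)

/-! ### Locks -/

/-- The valid projections of a lock-respecting execution to a single lock `m`:
a sequence of blocks `⟨acq(m) rel(m) : i⟩`, optionally followed by a single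
`⟨acq(m) : i⟩`.  `true` stands for `acq(m)`, `false` for `rel(m)`. -/
inductive LockSeq : List (Bool × ℕ) → Prop
  | nil : LockSeq []
  | final (i : ℕ) : LockSeq [(true, i)]
  | block (i : ℕ) {w : List (Bool × ℕ)} : LockSeq w → LockSeq ((true, i) :: (false, i) :: w)

/-- Projection of an indexed word over `Σ ∪ S_lk` to the indexed occurrences of
`acq(m)`/`rel(m)` for the lock `m`. -/
def lockProj {α M : Type} [DecidableEq M] (m : M) (τ' : List ((α ⊕ (M × Bool)) × ℕ)) :
    List (Bool × ℕ) :=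
  τ'.filterMap (fun x => match x.1 with
    | Sum.inl _ => none
    | Sum.inr p => if p.1 = m then some (p.2, x.2) else none)

/-- The lock synchronization predicate `sync_lk`. -/
def SyncLk {α M : Type} [DecidableEq M] (τ' : List ((α ⊕ (M × Bool)) × ℕ)) : Prop :=
  ∀ m : M, LockSeq (lockProj m τ')

/-- The language of a program `P = ((S_lk, sync_lk), G)` with locks. -/
def lockLang {α M : Type} [DecidableEq M] (G : CFG (α ⊕ (M × Bool))) :
    Set (List (α × ℕ)) :=
  { τ | ∃ τ', τ = restrictActions τ' ∧ SyncLk τ' ∧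
      ∀ i : ℕ, projThread i τ' ∈ G.traces ∨ projThread i τ' = [] }

/-- Coverability of a configuration in a program with locks. -/
def CoverableLk {α M : Type} [DecidableEq M] (G : CFG (α ⊕ (M × Bool)))
    {r : ℕ} (C : Fin r → G.Loc) : Prop :=
  ∃ (τ' : List ((α ⊕ (M × Bool)) × ℕ)) (t : Fin r → ℕ), SyncLk τ' ∧ Function.Injective t ∧
    ∀ k, PathRel G.Edge G.init (projThread (t k) τ') (C k)

/-! ### Locks and sync-points combined -/

/-- Restriction of an indexed word over `Σ ∪ S_lk ∪ {•}` to `(Σ ∪ S_lk)`-indexed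
letters. -/
def restrictSyncWord {α M : Type} (τ' : List (Option (α ⊕ (M × Bool)) × ℕ)) :
    List ((α ⊕ (M × Bool)) × ℕ) :=
  τ'.filterMap (fun x => x.1.map (fun e => (e, x.2)))

/-- Restriction of an indexed word over `Σ ∪ S_lk ∪ {•}` to `(Σ ∪ {•})`-indexed
letters. -/
def restrictBulletWord {α M : Type} (τ' : List (Option (α ⊕ (M × Bool)) × ℕ)) :
    List (Option α × ℕ) :=
  τ'.filterMap (fun x => match x.1 with
    | none => some ((none : Option α), x.2)
    | some (Sum.inl a) => some (some a, x.2)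
    | some (Sum.inr _) => none)

/-- Restriction of an indexed word over `Σ ∪ S_lk ∪ {•}` to `Σ`-indexed letters. -/
def restrictActionsO {α M : Type} (τ' : List (Option (α ⊕ (M × Bool)) × ℕ)) :
    List (α × ℕ) :=
  τ'.filterMap (fun x => match x.1 with
    | some (Sum.inl a) => some (a, x.2)
    | _ => none)

/-- The language `L(P̂, G')` of a lock program instrumented with sync-points. -/
def instrLockLang {α M : Type} [DecidableEq M] (G' : CFG (Option (α ⊕ (M × Bool)))) :
    Set (List (α × ℕ)) :=
  { τ | ∃ τ', τ = restrictActionsO τ' ∧ SyncLk (restrictSyncWord τ') ∧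
      SyncBullet (restrictBulletWord τ') ∧
      ∀ i : ℕ, projThread i τ' ∈ G'.traces ∨ projThread i τ' = [] }

/-- Projection of a pure lock execution to the indexed `acq`/`rel` occurrences of a single
lock `m` (`true` = acquire, `false` = release). -/
def lockProj16 {L : Type} [DecidableEq L] (m : L) (τ' : List ((L × Bool) × ℕ)) :
    List (Bool × ℕ) :=
  τ'.filterMap (fun x => if x.1.1 = m then some (x.1.2, x.2) else none)

/-- The lock synchronization predicate `sync_lk` for pure lock executions. -/
def SyncLk16 {L : Type} [DecidableEq L] (τ' : List ((L × Bool) × ℕ)) : Prop :=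
  ∀ m : L, LockSeq (lockProj16 m τ')

/-- Negation of a literal (a literal is a propositional variable with a polarity;
`¬¬x` is identified with `x`). -/
def negLit {V : Type} (l : V × Bool) : V × Bool := (l.1, !l.2)

/-- The complete run of thread `i` (out of `n`) that chooses literal `l`:
acquire `m_i^l`, then, for each `j ≠ i` in increasing order of `j`, acquire and release
`m_j^{¬l}`.  Locks are pairs `(literal, index)`; `((l, j), true)` is `acq(m_j^l)` and
`((l, j), false)` is `rel(m_j^l)`. -/
def runWord {V : Type} (n i : ℕ) (l : V × Bool) : List (((V × Bool) × ℕ) × Bool) :=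
  ((l, i), true) ::
    ((List.range n).filter (fun j => j != i)).flatMap
      (fun j => [((negLit l, j), true), ((negLit l, j), false)])


section Helpers

open List

variable {α β γ : Type}

lemma projThread_eq_filterMap (i : ℕ) (τ : List (α × ℕ)) :
    projThread i τ = τ.filterMap (fun x => if x.2 = i then some x.1 else none) := by
  induction τ with
  | nil => rfl
  | cons x τ ih =>
    by_cases h : x.2 = i <;>
      simp [projThread, List.filter_cons, h, List.filterMap_cons] at ih ⊢ <;>
      simpa [projThread] using ih

lemma mem_proj {a : α} {k : ℕ} {τ : List (α × ℕ)} :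
    a ∈ projThread k τ ↔ (a, k) ∈ τ := by
  rw [projThread_eq_filterMap, List.mem_filterMap]
  constructor
  · rintro ⟨x, hx, hfx⟩
    by_cases h : x.2 = k
    · simp only [h, if_true, Option.some_inj] at hfx
      have : x = (a, k) := Prod.ext hfx h
      rwa [this] at hx
    · simp [h] at hfx
  · intro h
    exact ⟨(a, k), h, by simp⟩

lemma proj_inv {x : α × ℕ} {a : α} {k : ℕ}
    (h : (if x.2 = k then some x.1 else none) = some a) : x = (a, k) := by
  by_cases hk : x.2 = k
  · simp only [hk, if_true, Option.some_inj] at h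
    exact Prod.ext h hk
  · simp [hk] at h

lemma lockProj16_eq {L : Type} [DecidableEq L] (m : L) (τ' : List ((L × Bool) × ℕ)) :
    lockProj16 m τ' = τ'.filterMap (fun x => if x.1.1 = m then some (x.1.2, x.2) else none) := rfl

lemma lock_inv {L : Type} [DecidableEq L] {m : L} {x : (L × Bool) × ℕ} {b : Bool} {k : ℕ}
    (h : (if x.1.1 = m then some (x.1.2, x.2) else none) = some (b, k)) : x = ((m, b), k) := by
  by_cases hm : x.1.1 = m
  · simp only [hm, if_true, Option.some_inj, Prod.mk.injEq] at h
    obtain ⟨hb, hk⟩ := h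
    exact Prod.ext (Prod.ext hm hb) hk
  · simp [hm] at h

lemma mem_lockProj {L : Type} [DecidableEq L] {m : L} {b : Bool} {k : ℕ}
    {τ' : List ((L × Bool) × ℕ)} :
    (b, k) ∈ lockProj16 m τ' ↔ ((m, b), k) ∈ τ' := by
  rw [lockProj16_eq, List.mem_filterMap]
  constructor
  · rintro ⟨x, hx, hfx⟩
    rwa [lock_inv hfx] at hx
  · intro h
    exact ⟨((m, b), k), h, by simp⟩

lemma sub_pair_of_filterMap {f : α → Option β} :
    ∀ {L : List α} {A B : List β} {x y : β},
      L.filterMap f = A ++ x :: B → y ∈ B →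
      ∃ a b, [a, b] <+ L ∧ f a = some x ∧ f b = some y := by
  intro L
  induction L with
  | nil =>
    intro A B x y h _
    exact absurd h (by simp)
  | cons c L ih =>
    intro A B x y h hy
    rw [List.filterMap_cons] at h
    cases hfc : f c with
    | none =>
      rw [hfc] at h
      obtain ⟨a, b, hs, ha, hb⟩ := ih h hy
      exact ⟨a, b, hs.cons c, ha, hb⟩
    | some d =>
      rw [hfc] at h
      cases A with
      | nil =>
        simp only [List.nil_append, List.cons.injEq] at h
        obtain ⟨rfl, hB⟩ := h
        rw [← hB] at hy
        obtain ⟨b, hbL, hfb⟩ := List.mem_filterMap.mp hy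
        exact ⟨c, b, (List.singleton_sublist.mpr hbL).cons₂ c, hfc, hfb⟩
      | cons e A' =>
        simp only [List.cons_append, List.cons.injEq] at h
        obtain ⟨rfl, h'⟩ := h
        obtain ⟨a, b, hs, ha, hb⟩ := ih h' hy
        exact ⟨a, b, hs.cons c, ha, hb⟩

lemma lockseq_last {w : List (Bool × ℕ)} {i : ℕ} (h : LockSeq w) :
    (true, i) ∈ w → (false, i) ∉ w → ∃ u, w = u ++ [(true, i)] := by
  induction h with
  | nil => simp
  | final k =>
    intro h1 _
    simp only [List.mem_singleton, Prod.mk.injEq, true_and] at h1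
    exact ⟨[], by simp [h1]⟩
  | block k hw ih =>
    intro h1 h2
    have hik : i ≠ k := by
      rintro rfl
      exact h2 (by simp)
    simp only [List.mem_cons, Prod.mk.injEq] at h1
    rcases h1 with ⟨-, h1⟩ | ⟨h1, -⟩ | h1
    · exact absurd h1 hik
    · simp at h1
    · obtain ⟨u, hu⟩ := ih h1
        (fun h => h2 (List.mem_cons_of_mem _ (List.mem_cons_of_mem _ h)))
      exact ⟨(true, k) :: (false, k) :: u, by simp [hu]⟩

lemma idx_lt [DecidableEq α] :
    ∀ {L : List α} {x y : α}, [x, y] <+ L → L.count y ≤ 1 →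
      L.idxOf x < L.idxOf y := by
  intro L
  induction L with
  | nil =>
    intro x y h _
    exact absurd (List.sublist_nil.mp h) (by simp)
  | cons c L ih =>
    intro x y h hc
    have hxy : x ≠ y := by
      rintro rfl
      have h2 : List.count x [x, x] ≤ List.count x (c :: L) := h.count_le x
      simp [List.count_cons] at h2 hc
      omega
    cases h with
    | cons _ h' =>
      have hyL : y ∈ L := h'.subset (by simp)
      have hcy : c ≠ y := by
        rintro rfl
        have hpos : 0 < List.count c L := List.count_pos_iff.mpr hyL
        rw [List.count_cons_self] at hc
        omega
      have hcount : L.count y ≤ 1 := by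
        rwa [List.count_cons_of_ne hcy] at hc
      have hlt := ih h' hcount
      have hx : List.idxOf x (c :: L) ≤ List.idxOf x L + 1 := by
        by_cases hcx : c = x
        · simp [hcx, List.idxOf_cons_self]
        · rw [List.idxOf_cons_ne _ hcx]
      rw [List.idxOf_cons_ne _ hcy]
      omega
    | cons_cons _ h' =>
      have hyL : y ∈ L := h'.subset (by simp)
      rw [List.idxOf_cons_self, List.idxOf_cons_ne _ hxy]
      omega

lemma ccons [DecidableEq α] (y z : α × ℕ) (L : List (α × ℕ)) :
    @List.count _ instBEqOfDecidableEq y (z :: L) =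
      @List.count _ instBEqOfDecidableEq y L + if y = z then 1 else 0 := by
  rw [@List.count_cons _ instBEqOfDecidableEq]
  simp only [beq_iff_eq]
  by_cases h : y = z
  · simp [h]
  · simp [h, Ne.symm h]

lemma count_proj [DecidableEq α] (a : α) (k : ℕ) (τ : List (α × ℕ)) :
    @List.count (α × ℕ) instBEqOfDecidableEq (a, k) τ = (projThread k τ).count a := by
  induction τ with
  | nil => rfl
  | cons x τ ih =>
    rw [ccons]
    by_cases h : x.2 = k
    · by_cases h2 : x.1 = a
      · have hx : x = (a, k) := Prod.ext h2 h
        subst hx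
        have hp : projThread k ((a, k) :: τ) = a :: projThread k τ := by
          simp [projThread, List.filter_cons]
        rw [hp, List.count_cons_self, ih, if_pos rfl]
      · have hp : projThread k (x :: τ) = x.1 :: projThread k τ := by
          simp [projThread, List.filter_cons, h]
        rw [hp, List.count_cons_of_ne h2, ih,
          if_neg (fun hh => h2 (congrArg Prod.fst hh.symm))]
        simp
    · have hp : projThread k (x :: τ) = projThread k τ := by
        simp [projThread, List.filter_cons, h]
      rw [hp, ih, if_neg (fun hh => h (congrArg Prod.snd hh.symm))]
      simp

end Helpers

section Helpers2
set_option linter.unusedSectionVars false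
set_option linter.unnecessarySimpa false

open List

variable {V : Type} [DecidableEq V]

lemma negLit_negLit (l : V × Bool) : negLit (negLit l) = l := by
  simp [negLit]

lemma negLit_ne (l : V × Bool) : negLit l ≠ l := by
  simp [negLit, Prod.ext_iff]

/-- The tail of `runWord`. -/
def runTail (n i : ℕ) (l : V × Bool) : List (((V × Bool) × ℕ) × Bool) :=
  ((List.range n).filter (fun j => j != i)).flatMap
    (fun j => [((negLit l, j), true), ((negLit l, j), false)])

lemma runWord_eq (n i : ℕ) (l : V × Bool) :
    runWord n i l = ((l, i), true) :: runTail n i l := rfl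

lemma mem_runTail {n i : ℕ} {l : V × Bool} {x : ((V × Bool) × ℕ) × Bool} :
    x ∈ runTail n i l ↔
      ∃ j, j < n ∧ j ≠ i ∧ (x = ((negLit l, j), true) ∨ x = ((negLit l, j), false)) := by
  simp only [runTail, List.mem_flatMap, List.mem_filter, List.mem_range, bne_iff_ne,
    List.mem_cons, List.mem_singleton, List.not_mem_nil, or_false]
  constructor
  · rintro ⟨j, ⟨hj, hji⟩, hx⟩
    exact ⟨j, hj, hji, hx⟩
  · rintro ⟨j, hj, hji, hx⟩
    exact ⟨j, ⟨hj, hji⟩, hx⟩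

lemma mem_runTail_of (n : ℕ) {i j : ℕ} (l : V × Bool) (b : Bool) (h1 : j < n) (h2 : j ≠ i) :
    ((negLit l, j), b) ∈ runTail n i l := by
  rw [mem_runTail]
  refine ⟨j, h1, h2, ?_⟩
  cases b
  · exact Or.inr rfl
  · exact Or.inl rfl

lemma nodup_pairs {γ : Type} (c : γ) :
    ∀ {S : List ℕ}, S.Nodup →
      (S.flatMap (fun j => [(((c, j) : γ × ℕ), true), ((c, j), false)])).Nodup := by
  intro S
  induction S with
  | nil => intro _; simp
  | cons j S ih =>
    intro h
    rw [List.flatMap_cons, List.nodup_append]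
    refine ⟨by simp, ih h.of_cons, ?_⟩
    intro x hx x' hx' hxx
    subst hxx
    obtain ⟨j', hj', hx'⟩ := List.mem_flatMap.mp hx'
    simp only [List.mem_cons, List.not_mem_nil, or_false] at hx hx'
    have hj : x.1.2 = j := by rcases hx with rfl | rfl <;> rfl
    have hj2 : x.1.2 = j' := by rcases hx' with rfl | rfl <;> rfl
    exact (List.nodup_cons.mp h).1 (by rw [show j = j' by omega]; exact hj')

lemma nodup_runWord (n i : ℕ) (l : V × Bool) : (runWord n i l).Nodup := by
  rw [runWord_eq]
  refine List.nodup_cons.mpr ⟨?_, ?_⟩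
  · intro h
    obtain ⟨j, _, _, hx⟩ := mem_runTail.mp h
    rcases hx with h | h <;> simpa [negLit, Prod.ext_iff] using h
  · exact nodup_pairs (negLit l) (List.Nodup.filter _ List.nodup_range)

lemma count_runWord_le (n i : ℕ) (l : V × Bool) (x : ((V × Bool) × ℕ) × Bool) :
    @List.count _ instBEqOfDecidableEq x (runWord n i l) ≤ 1 :=
  (@List.nodup_iff_count_le_one _ instBEqOfDecidableEq _ _).mp (nodup_runWord n i l) x

end Helpers2

section Helpers3
set_option linter.unusedSectionVars false

open List

variable {α β : Type}

lemma projThread_append (k : ℕ) (l₁ l₂ : List (α × ℕ)) :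
    projThread k (l₁ ++ l₂) = projThread k l₁ ++ projThread k l₂ := by
  simp [projThread, List.filter_append]

lemma projThread_nil (k : ℕ) : projThread k ([] : List (α × ℕ)) = [] := rfl

lemma projThread_flatMap (k : ℕ) (S : List β) (g : β → List (α × ℕ)) :
    projThread k (S.flatMap g) = S.flatMap (fun s => projThread k (g s)) := by
  induction S with
  | nil => rfl
  | cons s S ih => simp [List.flatMap_cons, projThread_append, ih]

lemma projThread_map (k j : ℕ) (w : List α) :
    projThread k (w.map (fun a => (a, j))) = if j = k then w else [] := by
  induction w with
  | nil => simp [projThread]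
  | cons a w ih =>
    by_cases h : j = k <;> simp [projThread, List.filter_cons, h] at ih ⊢ <;>
      simpa [projThread, h] using ih

lemma flatMap_eq_single {S : List α} {f : α → List β} {a : α}
    (hS : S.Nodup) (ha : a ∈ S) (h : ∀ x ∈ S, x ≠ a → f x = []) :
    S.flatMap f = f a := by
  induction S with
  | nil => cases ha
  | cons x S ih =>
    rcases List.mem_cons.mp ha with rfl | ha'
    · have hnil : S.flatMap f = [] := by
        rw [List.flatMap_eq_nil_iff]
        intro y hy
        exact h y (List.mem_cons_of_mem _ hy)
          (fun hh => (List.nodup_cons.mp hS).1 (hh ▸ hy))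
      simp [List.flatMap_cons, hnil]
    · have hx : f x = [] := h x (List.mem_cons_self)
        (fun hh => (List.nodup_cons.mp hS).1 (hh ▸ ha'))
      rw [List.flatMap_cons, hx, List.nil_append]
      exact ih (List.nodup_cons.mp hS).2 ha'
        (fun y hy => h y (List.mem_cons_of_mem _ hy))

lemma flatMap_eq_nil_of (S : List α) (f : α → List β) (h : ∀ x ∈ S, f x = []) :
    S.flatMap f = [] := List.flatMap_eq_nil_iff.mpr h

lemma lockseq_blocks {S : List α} {f : α → List (Bool × ℕ)}
    (h : ∀ x ∈ S, f x = [] ∨ ∃ i, f x = [(true, i), (false, i)]) :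
    LockSeq (S.flatMap f) := by
  induction S with
  | nil => exact LockSeq.nil
  | cons x S ih =>
    rw [List.flatMap_cons]
    rcases h x (List.mem_cons_self) with hx | ⟨i, hx⟩
    · rw [hx, List.nil_append]
      exact ih (fun y hy => h y (List.mem_cons_of_mem _ hy))
    · rw [hx]
      exact LockSeq.block i (ih (fun y hy => h y (List.mem_cons_of_mem _ hy)))

end Helpers3

section Helpers4
set_option linter.unusedSectionVars false

open List

lemma lockProj16_append {L : Type} [DecidableEq L] (m : L) (l₁ l₂ : List ((L × Bool) × ℕ)) :
    lockProj16 m (l₁ ++ l₂) = lockProj16 m l₁ ++ lockProj16 m l₂ := by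
  simp [lockProj16_eq, List.filterMap_append]

lemma lockProj16_flatMap {L β : Type} [DecidableEq L] (m : L) (S : List β)
    (g : β → List ((L × Bool) × ℕ)) :
    lockProj16 m (S.flatMap g) = S.flatMap (fun s => lockProj16 m (g s)) := by
  induction S with
  | nil => rfl
  | cons s S ih => simp [List.flatMap_cons, lockProj16_append, ih]

lemma lockProj16_cons {L : Type} [DecidableEq L] (m : L) (x : (L × Bool) × ℕ)
    (t : List ((L × Bool) × ℕ)) :
    lockProj16 m (x :: t) = (if x.1.1 = m then [(x.1.2, x.2)] else []) ++ lockProj16 m t := by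
  by_cases h : x.1.1 = m <;> simp [lockProj16_eq, List.filterMap_cons, h]

lemma lockProj_run {V : Type} [DecidableEq V] (n i : ℕ) (l c : V × Bool) (k : ℕ) :
    lockProj16 (c, k) ((runWord n i l).map (fun a => (a, i))) =
      (if (l, i) = ((c, k) : (V × Bool) × ℕ) then [(true, i)] else []) ++
      (if negLit l = c ∧ k < n ∧ k ≠ i then [(true, i), (false, i)] else []) := by
  have htail : lockProj16 ((c, k) : (V × Bool) × ℕ) ((runTail n i l).map (fun a => (a, i))) =
      (if negLit l = c ∧ k < n ∧ k ≠ i then [(true, i), (false, i)] else []) := by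
    rw [runTail, List.map_flatMap, lockProj16_flatMap]
    have hpc : ∀ j : ℕ,
        lockProj16 ((c, k) : (V × Bool) × ℕ)
          (([((negLit l, j), true), ((negLit l, j), false)]).map (fun a => (a, i))) =
        if ((negLit l, j) : (V × Bool) × ℕ) = (c, k) then [(true, i), (false, i)] else [] := by
      intro j
      by_cases h : ((negLit l, j) : (V × Bool) × ℕ) = (c, k) <;>
        simp [lockProj16_eq, List.filterMap_cons, h]
    simp only [hpc]
    by_cases hq : negLit l = c ∧ k < n ∧ k ≠ i
    · obtain ⟨h1, h2, h3⟩ := hq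
      rw [if_pos ⟨h1, h2, h3⟩]
      rw [flatMap_eq_single (a := k) ((List.nodup_range (n := n)).filter _)
          (by simp [List.mem_filter, List.mem_range, h2, bne_iff_ne, h3]) ?_]
      · rw [if_pos (by rw [h1])]
      · intro x _ hxk
        rw [if_neg (fun hh => hxk (Prod.ext_iff.mp hh).2)]
    · rw [if_neg hq]
      apply flatMap_eq_nil_of
      intro x hx
      obtain ⟨hxr, hxi⟩ := List.mem_filter.mp hx
      rw [if_neg]
      intro hh
      rw [Prod.mk.injEq] at hh
      obtain ⟨hc, hxk⟩ := hh
      subst hxk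
      exact hq ⟨hc, List.mem_range.mp hxr, (by simpa using hxi)⟩
  rw [runWord_eq, List.map_cons, lockProj16_cons]
  rw [htail]

end Helpers4

/-- Correctness of the 3-SAT-to-lock-coverability construction.
For a 3-CNF formula with clauses `Cl i` (each a triple of literals): there is an
interleaved execution `τ'` of the `n` threads respecting the lock semantics, in which
each thread `i < n` completes the run of thread `i` for some literal of clause `i`
(and no other thread acts), iff the formula is satisfiable. -/
theorem stmt_16 {V : Type} [DecidableEq V] (n : ℕ)
    (Cl : Fin n → (V × Bool) × (V × Bool) × (V × Bool)) :
    (∃ τ' : List ((((V × Bool) × ℕ) × Bool) × ℕ),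
        SyncLk16 τ' ∧
        (∀ i : Fin n, ∃ l : V × Bool,
            (l = (Cl i).1 ∨ l = (Cl i).2.1 ∨ l = (Cl i).2.2) ∧
            projThread (i : ℕ) τ' = runWord n (i : ℕ) l) ∧
        (∀ j : ℕ, n ≤ j → projThread j τ' = [])) ↔
      ∃ ρ : V → Bool, ∀ i : Fin n, ∃ l : V × Bool,
        (l = (Cl i).1 ∨ l = (Cl i).2.1 ∨ l = (Cl i).2.2) ∧ ρ l.1 = l.2 := by
  classical
  constructor
  · rintro ⟨τ', hsync, hrun, -⟩
    choose l hcl hproj using hrun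
    have key : ∀ i j : Fin n, l j ≠ negLit (l i) := by
      intro i j hji
      have hij : (i : ℕ) ≠ (j : ℕ) := by
        intro h
        have hij' : i = j := Fin.val_injective h
        rw [hij'] at hji
        exact negLit_ne (l j) hji.symm
      have hpi : projThread (i : ℕ) τ' = runWord n (i : ℕ) (l i) := hproj i
      have hpj : projThread (j : ℕ) τ' = runWord n (j : ℕ) (negLit (l i)) := by
        rw [hproj j, hji]
      -- membership facts
      have M1 : ((l i, (i : ℕ)), true) ∈ projThread (i : ℕ) τ' := by
        rw [hpi, runWord_eq]; exact List.mem_cons_self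
      have M2 : ((l i, (i : ℕ)), false) ∉ projThread (i : ℕ) τ' := by
        rw [hpi, runWord_eq]
        intro h
        rcases List.mem_cons.mp h with h | h
        · simp at h
        · rcases mem_runTail.mp h with ⟨j', _, _, h2 | h2⟩ <;>
            simp [negLit, Prod.ext_iff] at h2
      have M3 : ((l i, (i : ℕ)), false) ∈ projThread (j : ℕ) τ' := by
        rw [hpj, runWord_eq]
        refine List.mem_cons_of_mem _ ?_
        have := mem_runTail_of n (negLit (l i)) false i.isLt hij
        rwa [negLit_negLit] at this
      have M4 : ((negLit (l i), (j : ℕ)), true) ∈ projThread (j : ℕ) τ' := by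
        rw [hpj, runWord_eq]; exact List.mem_cons_self
      have M5 : ((negLit (l i), (j : ℕ)), false) ∉ projThread (j : ℕ) τ' := by
        rw [hpj, runWord_eq]
        intro h
        rcases List.mem_cons.mp h with h | h
        · simp at h
        · rcases mem_runTail.mp h with ⟨j', _, _, h2 | h2⟩ <;>
            simp [negLit, Prod.ext_iff] at h2
      have M6 : ((negLit (l i), (j : ℕ)), false) ∈ projThread (i : ℕ) τ' := by
        rw [hpi, runWord_eq]
        exact List.mem_cons_of_mem _ (mem_runTail_of n (l i) false j.isLt (Ne.symm hij))
      -- S1 : [((l i,i),false),j) , (((l i,i),true),i)] <+ τ'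
      obtain ⟨u, hu⟩ := lockseq_last (hsync (l i, (i : ℕ)))
        (mem_lockProj.mpr (mem_proj.mp M1))
        (fun h => M2 (mem_proj.mpr (mem_lockProj.mp h)))
      have hfj : (false, (j : ℕ)) ∈ u := by
        have hmem : (false, (j : ℕ)) ∈ lockProj16 (l i, (i : ℕ)) τ' :=
          mem_lockProj.mpr (mem_proj.mp M3)
        rw [hu] at hmem
        rcases List.mem_append.mp hmem with h | h
        · exact h
        · simp at h
      obtain ⟨u1, u2, rfl⟩ := List.append_of_mem hfj
      have hdec1 : τ'.filterMap
          (fun x => if x.1.1 = ((l i, (i : ℕ)) : (V × Bool) × ℕ) then some (x.1.2, x.2) else none)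
          = u1 ++ (false, (j : ℕ)) :: (u2 ++ [(true, (i : ℕ))]) := by
        rw [← lockProj16_eq, hu]; simp
      obtain ⟨a1, b1, hs1, ha1, hb1⟩ := sub_pair_of_filterMap (y := (true, (i : ℕ))) hdec1 (by simp)
      rw [lock_inv ha1, lock_inv hb1] at hs1
      -- S2
      have hdec2 : τ'.filterMap (fun x => if x.2 = (j : ℕ) then some x.1 else none)
          = [] ++ ((negLit (l i), (j : ℕ)), true) :: (runTail n (j : ℕ) (negLit (l i))).map
              (fun a => a) := by
        rw [← projThread_eq_filterMap, hpj, runWord_eq]; simp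
      have hy2 : ((l i, (i : ℕ)), false) ∈ (runTail n (j : ℕ) (negLit (l i))).map
          (fun a => a) := by
        rw [List.map_id']
        have := mem_runTail_of n (negLit (l i)) false i.isLt hij
        rwa [negLit_negLit] at this
      obtain ⟨a2, b2, hs2, ha2, hb2⟩ := sub_pair_of_filterMap hdec2 hy2
      rw [proj_inv ha2, proj_inv hb2] at hs2
      -- S3
      obtain ⟨u', hu'⟩ := lockseq_last (hsync (negLit (l i), (j : ℕ)))
        (mem_lockProj.mpr (mem_proj.mp M4))
        (fun h => M5 (mem_proj.mpr (mem_lockProj.mp h)))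
      have hfi : (false, (i : ℕ)) ∈ u' := by
        have hmem : (false, (i : ℕ)) ∈ lockProj16 (negLit (l i), (j : ℕ)) τ' :=
          mem_lockProj.mpr (mem_proj.mp M6)
        rw [hu'] at hmem
        rcases List.mem_append.mp hmem with h | h
        · exact h
        · simp at h
      obtain ⟨u1', u2', rfl⟩ := List.append_of_mem hfi
      have hdec3 : τ'.filterMap
          (fun x => if x.1.1 = ((negLit (l i), (j : ℕ)) : (V × Bool) × ℕ)
            then some (x.1.2, x.2) else none)
          = u1' ++ (false, (i : ℕ)) :: (u2' ++ [(true, (j : ℕ))]) := by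
        rw [← lockProj16_eq, hu']; simp
      obtain ⟨a3, b3, hs3, ha3, hb3⟩ := sub_pair_of_filterMap (y := (true, (j : ℕ))) hdec3 (by simp)
      rw [lock_inv ha3, lock_inv hb3] at hs3
      -- S4
      have hdec4 : τ'.filterMap (fun x => if x.2 = (i : ℕ) then some x.1 else none)
          = [] ++ ((l i, (i : ℕ)), true) :: (runTail n (i : ℕ) (l i)).map (fun a => a) := by
        rw [← projThread_eq_filterMap, hpi, runWord_eq]; simp
      have hy4 : ((negLit (l i), (j : ℕ)), false) ∈ (runTail n (i : ℕ) (l i)).map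
          (fun a => a) := by
        rw [List.map_id']
        exact mem_runTail_of n (l i) false j.isLt (Ne.symm hij)
      obtain ⟨a4, b4, hs4, ha4, hb4⟩ := sub_pair_of_filterMap hdec4 hy4
      rw [proj_inv ha4, proj_inv hb4] at hs4
      -- counts
      have c1 := count_runWord_le n (i : ℕ) (l i) ((l i, (i : ℕ)), true)
      rw [← hpi, ← count_proj] at c1
      have c2 := count_runWord_le n (j : ℕ) (negLit (l i)) ((l i, (i : ℕ)), false)
      rw [← hpj, ← count_proj] at c2
      have c3 := count_runWord_le n (j : ℕ) (negLit (l i)) ((negLit (l i), (j : ℕ)), true)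
      rw [← hpj, ← count_proj] at c3
      have c4 := count_runWord_le n (i : ℕ) (l i) ((negLit (l i), (j : ℕ)), false)
      rw [← hpi, ← count_proj] at c4
      have q1 := idx_lt hs1 c1
      have q2 := idx_lt hs2 c2
      have q3 := idx_lt hs3 c3
      have q4 := idx_lt hs4 c4
      omega
    refine ⟨fun x => decide (∃ i : Fin n, l i = (x, true)), fun i => ⟨l i, hcl i, ?_⟩⟩
    show decide (∃ j : Fin n, l j = ((l i).1, true)) = (l i).2
    by_cases hP : ∃ j : Fin n, l j = ((l i).1, true)
    · rw [decide_eq_true hP]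
      cases hb : (l i).2
      · exfalso
        obtain ⟨j, hj⟩ := hP
        apply key i j
        rw [hj]
        simp [negLit, hb]
      · rfl
    · rw [decide_eq_false hP]
      cases hb : (l i).2
      · rfl
      · exact absurd ⟨i, by rw [← hb]⟩ hP
  · rintro ⟨ρ, hρ⟩
    choose L hcl hsat using hρ
    refine ⟨(List.finRange n).flatMap
        (fun i : Fin n => (runWord n (i : ℕ) (L i)).map (fun a => (a, (i : ℕ)))), ?_, ?_, ?_⟩
    · rintro ⟨c, k⟩
      rw [lockProj16_flatMap]
      by_cases hk : ∃ hk : k < n, L ⟨k, hk⟩ = c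
      · obtain ⟨hk, hc⟩ := hk
        have hρc : ρ c.1 = c.2 := by rw [← hc]; exact hsat ⟨k, hk⟩
        rw [flatMap_eq_single (a := (⟨k, hk⟩ : Fin n)) (List.nodup_finRange n)
          (List.mem_finRange _) ?_]
        · rw [lockProj_run, if_pos (by rw [hc]), if_neg (by simp)]
          exact LockSeq.final k
        · intro x _ hx
          rw [lockProj_run, if_neg ?_, if_neg ?_]
          · rfl
          · rintro ⟨hnc, -, -⟩
            have hLx : L x = negLit c := by
              rw [← hnc, negLit_negLit]
            have := hsat x
            rw [hLx, negLit] at this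
            simp only at this
            rw [hρc] at this
            exact absurd this (by simp)
          · intro hEq
            rw [Prod.mk.injEq] at hEq
            exact hx (Fin.ext hEq.2)
      · apply lockseq_blocks
        intro x _
        rw [lockProj_run, if_neg ?_]
        · by_cases hcond : negLit (L x) = c ∧ k < n ∧ k ≠ (x : ℕ)
          · right
            exact ⟨(x : ℕ), by rw [if_pos hcond]; rfl⟩
          · left
            rw [if_neg hcond]
            rfl
        · intro hEq
          rw [Prod.mk.injEq] at hEq
          apply hk
          refine ⟨hEq.2 ▸ x.isLt, ?_⟩
          have hxx : (⟨k, hEq.2 ▸ x.isLt⟩ : Fin n) = x := Fin.ext hEq.2.symm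
          rw [hxx]
          exact hEq.1
    · intro i
      refine ⟨L i, hcl i, ?_⟩
      rw [projThread_flatMap]
      rw [flatMap_eq_single (a := i) (List.nodup_finRange n) (List.mem_finRange i) ?_]
      · rw [projThread_map, if_pos rfl]
      · intro x _ hx
        rw [projThread_map, if_neg (fun h => hx (Fin.ext h))]
    · intro j hj
      rw [projThread_flatMap]
      apply flatMap_eq_nil_of
      intro x _
      rw [projThread_map, if_neg]
      exact fun h => absurd (h ▸ x.isLt) (by omega)
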